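/- Let $q$ be a prime power and let $F$ be a finite field with $|F| = q$. Let $f \in F[x_1, \ldots, x_n]$ be a multivariate polynomial of total degree at most $(q-1)n$, and suppose that the coefficient of the monomial $\prod_{i=1}^n x_i^{q-1}$ in $f$ is nonzero. Then there exists $(s_1, \ldots, s_n) \in F^n$ such that $f(s_1, \ldots, s_n) \neq 0$. -/

import Mathlib

open Finset MvPolynomial

/-- Sum of `x ^ k` over a finite field: `-1` if `k` is a positive multiple of
`card - 1`, otherwise `0`. -/
lemma sum_pow_finite_field (K : Type*) [Field K] [Fintype K] (k : ℕ) :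
    ∑ x : K, x ^ k =
      if k ≠ 0 ∧ (Fintype.card K - 1) ∣ k then -1 else 0 := by
  classical
  rcases eq_or_ne k 0 with rfl | hk
  · simp only [pow_zero, Finset.sum_const, Finset.card_univ, nsmul_eq_mul, mul_one]
    rw [if_neg (by simp)]
    exact FiniteField.cast_card_eq_zero K
  · let φ : Kˣ ↪ K := ⟨fun x ↦ x, fun _ _ => Units.ext⟩
    have hmap : Finset.univ.map φ = Finset.univ \ {(0 : K)} := by
      ext x
      simp only [Finset.mem_map, Finset.mem_univ, Finset.mem_sdiff,
        Finset.mem_singleton, true_and]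
      constructor
      · rintro ⟨u, rfl⟩; exact Units.ne_zero u
      · intro hx; exact ⟨Units.mk0 x hx, rfl⟩
    have h0 : ∑ x : K, x ^ k = ∑ x : Kˣ, (x : K) ^ k := by
      calc ∑ x : K, x ^ k = ∑ x ∈ Finset.univ \ {(0:K)}, x ^ k := by
            rw [Finset.sum_sdiff_eq_sub (Finset.subset_univ _),
              Finset.sum_singleton, zero_pow hk, sub_zero]
        _ = ∑ x : Kˣ, (x : K) ^ k := by rw [← hmap, Finset.sum_map]; rfl
    rw [h0]
    have := FiniteField.sum_pow_units K k
    rw [this]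
    simp [hk]

theorem CN_corollary_finite_field
    (q n : ℕ) (hq : IsPrimePow q)
    (F : Type*) [Field F] [Fintype F] (hcard : Fintype.card F = q)
    (f : MvPolynomial (Fin n) F)
    (hdeg : f.totalDegree ≤ (q - 1) * n)
    (hcoeff : MvPolynomial.coeff (Finsupp.equivFunOnFinite.symm fun _ : Fin n => q - 1) f ≠ 0) :
    ∃ s : Fin n → F, MvPolynomial.eval s f ≠ 0 := by
  classical
  by_contra h
  push_neg at h
  set d₀ : (Fin n) →₀ ℕ := Finsupp.equivFunOnFinite.symm fun _ : Fin n => q - 1 with hd₀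
  have hd₀i : ∀ i, d₀ i = q - 1 := fun i => rfl
  have hq1 : 1 < q := hq.one_lt
  have hqF : Fintype.card F - 1 = q - 1 := by rw [hcard]
  -- key computation: sum of evaluations
  have key : ∑ x : Fin n → F, eval x f = f.coeff d₀ * (-1) ^ n := by
    calc ∑ x : Fin n → F, eval x f
        = ∑ x : Fin n → F, ∑ d ∈ f.support, f.coeff d * ∏ i, x i ^ d i := by
          simp only [eval_eq']
      _ = ∑ d ∈ f.support, ∑ x : Fin n → F, f.coeff d * ∏ i, x i ^ d i := Finset.sum_comm
      _ = ∑ d ∈ f.support, f.coeff d * ∏ i, ∑ a : F, a ^ d i := by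
          refine Finset.sum_congr rfl fun d _ => ?_
          rw [← Finset.mul_sum]
          congr 1
          rw [Finset.prod_univ_sum]
          rfl
      _ = f.coeff d₀ * (-1) ^ n := ?_
    rw [Finset.sum_eq_single d₀]
    · congr 1
      rw [Finset.prod_congr rfl fun i _ => ?_, Finset.prod_const, Finset.card_univ,
        Fintype.card_fin]
      rw [sum_pow_finite_field, if_pos ⟨by rw [hd₀i]; omega, by rw [hqF, hd₀i]⟩]
    · intro d hd hne
      -- some factor must vanish
      by_contra hcontra
      have hfac : ∀ i, ∑ a : F, a ^ d i ≠ 0 := by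
        intro i hzero
        exact hcontra (by rw [Finset.prod_eq_zero (Finset.mem_univ i) hzero, mul_zero])
      have hge : ∀ i, q - 1 ≤ d i := by
        intro i
        have := hfac i
        rw [sum_pow_finite_field] at this
        by_cases hcase : d i ≠ 0 ∧ (Fintype.card F - 1) ∣ d i
        · obtain ⟨hne0, ⟨c, hc⟩⟩ := hcase
          rw [hqF] at hc
          rcases Nat.eq_zero_or_pos c with rfl | hc0
          · omega
          · calc q - 1 ≤ (q - 1) * c := Nat.le_mul_of_pos_right _ hc0
              _ = d i := hc.symm
        · exact absurd (if_neg hcase) this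
      -- total degree forces d = d₀
      have hsum : ∑ i, d i ≤ (q - 1) * n := by
        calc ∑ i, d i = d.sum fun _ m => m := by
              rw [Finsupp.sum_fintype]; intro; rfl
          _ ≤ f.totalDegree := MvPolynomial.le_totalDegree hd
          _ ≤ (q - 1) * n := hdeg
      have heq : ∀ i, d i = q - 1 := by
        intro i
        by_contra hne'
        have hlt : q - 1 < d i := lt_of_le_of_ne (hge i) (Ne.symm hne')
        have : (q - 1) * n < ∑ j, d j := by
          calc (q - 1) * n = ∑ _j : Fin n, (q - 1) := by
                rw [Finset.sum_const, Finset.card_univ, Fintype.card_fin, smul_eq_mul,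
                  mul_comm]
            _ < ∑ j, d j := Finset.sum_lt_sum (fun j _ => hge j) ⟨i, Finset.mem_univ i, hlt⟩
        omega
      exact hne (Finsupp.ext fun i => by rw [heq i, hd₀i])
    · intro hd
      rw [MvPolynomial.notMem_support_iff.mp hd, zero_mul]
  have hzero : ∑ x : Fin n → F, eval x f = 0 := Finset.sum_eq_zero fun x _ => h x
  rw [key] at hzero
  exact hcoeff (by
    have := mul_eq_zero.mp hzero
    rcases this with h' | h'
    · exact h'
    · exact absurd h' (pow_ne_zero _ (neg_ne_zero.mpr one_ne_zero)))
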